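/- For any finite undirected multigraph G, the number of acyclic fourientations of G equals the sum, over all orientations α of G, of 2^{|Acy(α)|}, where Acy(α) is the set of acyclic arcs of α. -/

import Mathlib

namespace SubgraphsVsOrientations

/-- The four possible configurations of an edge in a fourientation:
`zero` = 0-way, `forward`/`backward` = the two 1-way configurations (relative to
a reference direction of the edge), `two` = 2-way. -/
inductive Four : Type
  | zero | forward | backward | two
deriving DecidableEq

instance instFintypeFour : Fintype Four :=
  ⟨{Four.zero, Four.forward, Four.backward, Four.two}, fun x => by cases x <;> simp⟩

variable {V E : Type*}

/-- Whether configuration `c` allows traversal of the edge in direction `b`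
(`b = true` means from `src` to `tgt`). -/
def allows : Four → Bool → Prop
  | Four.zero, _ => False
  | Four.forward, b => b = true
  | Four.backward, b => b = false
  | Four.two, _ => True

/-- An edge configuration is solid if it is 0-way or 2-way. -/
def IsSolid (c : Four) : Prop := c = Four.zero ∨ c = Four.two

/-- A configuration is 1-way if it is `forward` or `backward`. -/
def IsOneWay (c : Four) : Prop := c = Four.forward ∨ c = Four.backward

/-- Reversing a configuration: swaps the two 1-way configurations,
fixes 0-way and 2-way. -/
def flipFour : Four → Four
  | Four.forward => Four.backward
  | Four.backward => Four.forward
  | c => c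

/-- The 1-way configuration corresponding to direction `b`. -/
def oneWayFour (b : Bool) : Four := if b then Four.forward else Four.backward

/-- Tail of the arc `(e, b)` (the edge `e` traversed in direction `b`). -/
def arcTail (src tgt : E → V) (a : E × Bool) : V := if a.2 then src a.1 else tgt a.1

/-- Head of the arc `(e, b)`. -/
def arcHead (src tgt : E → V) (a : E × Bool) : V := if a.2 then tgt a.1 else src a.1

/-- One-step relation of the digraph `G⃗(A,B;φ)`: there is an arc from `x` to `y`, either
a traversable directed edge of the fourientation `φ`, or an extra arc from `A ∪ B`. -/
def arcStep (src tgt : E → V) (A B : Set (V × V)) (φ : E → Four) (x y : V) : Prop :=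
  (∃ a : E × Bool, allows (φ a.1) a.2 ∧ arcTail src tgt a = x ∧ arcHead src tgt a = y)
    ∨ (x, y) ∈ A ∪ B

/-- Reachability by a directed path in the digraph `G⃗(A,B;φ)`. -/
def reach (src tgt : E → V) (A B : Set (V × V)) (φ : E → Four) : V → V → Prop :=
  Relation.ReflTransGen (arcStep src tgt A B φ)

/-- A fourientation `φ` is `(A,B)`-valid: in `G⃗(A,B;φ)`, for every `(u,v) ∈ A` the vertex `v`
cannot reach `u`, and for every `(u,v) ∈ B` the vertex `v` can reach `u`. -/
def IsValid (src tgt : E → V) (A B : Set (V × V)) (φ : E → Four) : Prop :=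
  (∀ p ∈ A, ¬ reach src tgt A B φ p.2 p.1) ∧ (∀ p ∈ B, reach src tgt A B φ p.2 p.1)

/-- The set of solid edges of a fourientation. -/
def solidSet (φ : E → Four) : Set E := {e | IsSolid (φ e)}

/-- The fourientation associated to an orientation `σ : E → Bool` (every edge 1-way). -/
def toFour (σ : E → Bool) : E → Four := fun e => oneWayFour (σ e)

open Classical in
/-- The fourientation associated to a (spanning) subgraph `F ⊆ E`: edges of `F` are 2-way,
the other edges are 0-way. -/
noncomputable def toFourSub (F : Set E) : E → Four :=
  fun e => if e ∈ F then Four.two else Four.zero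

/-- The arc `(e,b)` is the arc of a 1-way edge of `φ`. -/
def oneWayArc (φ : E → Four) (a : E × Bool) : Prop := φ a.1 = oneWayFour a.2

/-- `Cyc(φ)`: the set of cyclic 1-way edges (arcs) of the fourientation `φ`, in the digraph
`G⃗(A,B;φ)`: the head of the arc can reach its tail. -/
def CycSet (src tgt : E → V) (A B : Set (V × V)) (φ : E → Four) : Set (E × Bool) :=
  {a | oneWayArc φ a ∧ reach src tgt A B φ (arcHead src tgt a) (arcTail src tgt a)}

/-- `Acy(φ)`: the set of acyclic 1-way edges (arcs) of the fourientation `φ`. -/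
def AcySet (src tgt : E → V) (A B : Set (V × V)) (φ : E → Four) : Set (E × Bool) :=
  {a | oneWayArc φ a ∧ ¬ reach src tgt A B φ (arcHead src tgt a) (arcTail src tgt a)}

/-- `l` is (the arc sequence of) a directed cycle: a nonempty closed chain of arcs
visiting no vertex twice. -/
def IsDirCycle (src tgt : E → V) (l : List (E × Bool)) : Prop :=
  ∃ h : l ≠ [],
    l.Chain' (fun a b => arcHead src tgt a = arcTail src tgt b) ∧
    arcHead src tgt (l.getLast h) = arcTail src tgt (l.head h) ∧
    (l.map (arcTail src tgt)).Nodup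

/-- Reversing the directed cycle `l` in the fourientation `φ`: all 1-way edges on the cycle are
reversed, other edges (in particular 2-way edges of the cycle) are unchanged. -/
def revCyc [DecidableEq E] (φ : E → Four) (l : List (E × Bool)) : E → Four :=
  fun e => if (e, true) ∈ l ∨ (e, false) ∈ l then flipFour (φ e) else φ e

/-- One cycle-reversal move: `ψ` is obtained from `φ` by reversing a directed cycle of `φ`. -/
def CycleStep (src tgt : E → V) [DecidableEq E] (φ ψ : E → Four) : Prop :=
  ∃ l, IsDirCycle src tgt l ∧ (∀ a ∈ l, allows (φ a.1) a.2) ∧ ψ = revCyc φ l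

/-- The edge `e` crosses the cut given by `V1` (in either direction). -/
def edgeCrosses (src tgt : E → V) (V1 : Set V) (e : E) : Prop :=
  (src e ∈ V1 ∧ tgt e ∉ V1) ∨ (tgt e ∈ V1 ∧ src e ∉ V1)

/-- The cut `V1 / V1ᶜ` defines a directed `(A,B)`-cocycle of `G⃗(A,B;φ)`: the set of arcs from
`V1` to `V1ᶜ` is nonempty, no arc of the digraph goes from `V1ᶜ` to `V1`, and no arc of
`A ∪ B` crosses the cut (in either direction). -/
def IsABCocycleCut (src tgt : E → V) (A B : Set (V × V)) (φ : E → Four) (V1 : Set V) : Prop :=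
  (∃ a : E × Bool, allows (φ a.1) a.2 ∧ arcTail src tgt a ∈ V1 ∧ arcHead src tgt a ∉ V1) ∧
  (∀ a : E × Bool, allows (φ a.1) a.2 → ¬ (arcTail src tgt a ∉ V1 ∧ arcHead src tgt a ∈ V1)) ∧
  (∀ p ∈ A ∪ B, ((p : V × V).1 ∈ V1 ↔ p.2 ∈ V1))

open Classical in
/-- Reversing the directed cocycle given by the cut `V1`: all 1-way edges crossing the cut are
reversed, other edges (in particular 0-way edges crossing the cut) are unchanged. -/
noncomputable def revCut (src tgt : E → V) (φ : E → Four) (V1 : Set V) : E → Four :=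
  fun e => if edgeCrosses src tgt V1 e then flipFour (φ e) else φ e

/-- One cocycle-reversal move: `ψ` is obtained from `φ` by reversing a directed
`(A,B)`-cocycle of `φ`. -/
def CocycleStep (src tgt : E → V) (A B : Set (V × V)) (φ ψ : E → Four) : Prop :=
  ∃ V1 : Set V, IsABCocycleCut src tgt A B φ V1 ∧ ψ = revCut src tgt φ V1

/-- One cycle- or cocycle-reversal move. -/
def CCStep (src tgt : E → V) (A B : Set (V × V)) [DecidableEq E] (φ ψ : E → Four) : Prop :=
  CycleStep src tgt φ ψ ∨ CocycleStep src tgt A B φ ψ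

/-- `φ` contains no cycle (of the graph `G`) made entirely of 2-way edges. -/
def NoTwoWayCycle (src tgt : E → V) (φ : E → Four) : Prop :=
  ¬ ∃ l : List (E × Bool), IsDirCycle src tgt l ∧ (l.map Prod.fst).Nodup ∧
      ∀ a ∈ l, φ a.1 = Four.two

/-- `φ` contains no `(A,B)`-cocycle (of the graph `G`) made entirely of 0-way edges:
there is no cut, not crossed by any arc of `A ∪ B`, crossed by at least one edge of `G`,
all of whose crossing edges are 0-way. -/
def NoZeroWayCocycle (src tgt : E → V) (A B : Set (V × V)) (φ : E → Four) : Prop :=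
  ¬ ∃ V1 : Set V, (∃ e, edgeCrosses src tgt V1 e) ∧
      (∀ e, edgeCrosses src tgt V1 e → φ e = Four.zero) ∧
      (∀ p ∈ A ∪ B, ((p : V × V).1 ∈ V1 ↔ p.2 ∈ V1))

/-- The subgraph `F` contains no cycle (it is a forest). -/
def NoCycleIn (src tgt : E → V) (F : Set E) : Prop :=
  ¬ ∃ l : List (E × Bool), IsDirCycle src tgt l ∧ (l.map Prod.fst).Nodup ∧ ∀ a ∈ l, a.1 ∈ F

/-- One undirected adjacency step in the graph `F ∪ A̲ ∪ B̲`. -/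
def usym (src tgt : E → V) (A B : Set (V × V)) (F : Set E) (x y : V) : Prop :=
  (∃ e ∈ F, (src e = x ∧ tgt e = y) ∨ (src e = y ∧ tgt e = x)) ∨
  (∃ p ∈ A ∪ B, ((p : V × V) = (x, y) ∨ p = (y, x)))

/-- Connectivity (by undirected paths) in the graph `F ∪ A̲ ∪ B̲`. -/
def ureach (src tgt : E → V) (A B : Set (V × V)) (F : Set E) : V → V → Prop :=
  Relation.ReflTransGen (usym src tgt A B F)

/-- The subgraph `F` is `(A,B)`-connected: the connected components of `F ∪ A̲ ∪ B̲`
coincide with those of `G ∪ A̲ ∪ B̲`. -/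
def ABConnected (src tgt : E → V) (A B : Set (V × V)) (F : Set E) : Prop :=
  ∀ x y, ureach src tgt A B F x y ↔ ureach src tgt A B Set.univ x y



section Aux

open Relation Finset

variable {V E : Type*}

private lemma rtg_or_single {α : Type*} {r : α → α → Prop} {p q x y : α}
    (h : Relation.ReflTransGen (fun a b => r a b ∨ (a = p ∧ b = q)) x y) :
    Relation.ReflTransGen r x y ∨
      (Relation.ReflTransGen r x p ∧ Relation.ReflTransGen r q y) := by
  induction h using Relation.ReflTransGen.head_induction_on with
  | refl => exact Or.inl .refl
  | head hstep _ ih =>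
    rcases hstep with hr | ⟨rfl, rfl⟩
    · rcases ih with h1 | ⟨h1, h2⟩
      · exact Or.inl (Relation.ReflTransGen.head hr h1)
      · exact Or.inr ⟨Relation.ReflTransGen.head hr h1, h2⟩
    · rcases ih with h1 | ⟨_, h2⟩
      · exact Or.inr ⟨.refl, h1⟩
      · exact Or.inr ⟨.refl, h2⟩

private lemma rtg_congr {α : Type*} {r r' : α → α → Prop} (h : ∀ x y, r x y ↔ r' x y)
    {x y : α} : Relation.ReflTransGen r x y ↔ Relation.ReflTransGen r' x y :=
  ⟨fun hr => Relation.ReflTransGen.mono (p := r') (fun a b hab => (h a b).mp hab) _ _ hr,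
   fun hr => Relation.ReflTransGen.mono (p := r) (fun a b hab => (h a b).mpr hab) _ _ hr⟩

/-- All 1-way arcs with edge in `W` are acyclic. -/
private def GoodOn (src tgt : E → V) (W : Set E) (φ : E → Four) : Prop :=
  ∀ a : E × Bool, a.1 ∈ W → oneWayArc φ a →
    ¬ reach src tgt ∅ ∅ φ (arcHead src tgt a) (arcTail src tgt a)

private lemma reach_def {src tgt : E → V} {A B : Set (V × V)} {φ : E → Four} {x y : V} :
    reach src tgt A B φ x y ↔ Relation.ReflTransGen (arcStep src tgt A B φ) x y := Iff.rfl

private lemma arcStep_empty {src tgt : E → V} {φ : E → Four} {x y : V} :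
    arcStep src tgt ∅ ∅ φ x y ↔
      ∃ a : E × Bool, allows (φ a.1) a.2 ∧ arcTail src tgt a = x ∧ arcHead src tgt a = y := by
  simp [arcStep]

private lemma allows_oneWayFour {b : Bool} : allows (oneWayFour b) b := by
  cases b <;> simp [allows, oneWayFour]

private lemma oneWayFour_inj {b b' : Bool} (h : oneWayFour b = oneWayFour b') : b = b' := by
  cases b <;> cases b' <;> simp_all [oneWayFour]

private lemma oneWay_allows {φ : E → Four} {a : E × Bool} (h : oneWayArc φ a) :
    allows (φ a.1) a.2 := by
  rw [oneWayArc] at h; rw [h]; exact allows_oneWayFour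

private lemma oneWay_step {src tgt : E → V} {φ : E → Four} {a : E × Bool}
    (h : oneWayArc φ a) :
    arcStep src tgt ∅ ∅ φ (arcTail src tgt a) (arcHead src tgt a) :=
  arcStep_empty.mpr ⟨a, oneWay_allows h, rfl, rfl⟩

variable [DecidableEq E]

private lemma step_update {src tgt : E → V} {φ : E → Four} {e0 : E} {c : Four} {x y : V} :
    arcStep src tgt ∅ ∅ (Function.update φ e0 c) x y ↔
      (arcStep src tgt ∅ ∅ (Function.update φ e0 Four.zero) x y ∨
        (allows c true ∧ x = src e0 ∧ y = tgt e0)) ∨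
      (allows c false ∧ x = tgt e0 ∧ y = src e0) := by
  constructor
  · intro h
    obtain ⟨⟨e, b⟩, hA, rfl, rfl⟩ := arcStep_empty.mp h
    by_cases he : e = e0
    · subst he
      rw [Function.update_self] at hA
      cases b
      · exact Or.inr ⟨hA, by simp [arcTail, arcHead]⟩
      · exact Or.inl (Or.inr ⟨hA, by simp [arcTail, arcHead]⟩)
    · rw [Function.update_of_ne he] at hA
      exact Or.inl (Or.inl (arcStep_empty.mpr
        ⟨(e, b), by rw [Function.update_of_ne he]; exact hA, rfl, rfl⟩))
  · rintro ((h | ⟨hc, rfl, rfl⟩) | ⟨hc, rfl, rfl⟩)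
    · obtain ⟨⟨e, b⟩, hA, rfl, rfl⟩ := arcStep_empty.mp h
      by_cases he : e = e0
      · subst he; rw [Function.update_self] at hA; exact absurd hA (by simp [allows])
      · rw [Function.update_of_ne he] at hA
        exact arcStep_empty.mpr ⟨(e, b), by rw [Function.update_of_ne he]; exact hA, rfl, rfl⟩
    · exact arcStep_empty.mpr ⟨(e0, true), by rw [Function.update_self]; exact hc,
        by simp [arcTail], by simp [arcHead]⟩
    · exact arcStep_empty.mpr ⟨(e0, false), by rw [Function.update_self]; exact hc,
        by simp [arcTail], by simp [arcHead]⟩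

private lemma oneWayArc_update {φ : E → Four} {e0 : E} {c : Four} {a : E × Bool}
    (h : a.1 ≠ e0) : oneWayArc (Function.update φ e0 c) a ↔ oneWayArc φ a := by
  unfold oneWayArc; rw [Function.update_of_ne h]


section Core

variable {src tgt : E → V} {φ : E → Four} {e0 : E}

private lemma step_fwd_iff {x y : V} :
    arcStep src tgt ∅ ∅ (Function.update φ e0 Four.forward) x y ↔
      arcStep src tgt ∅ ∅ (Function.update φ e0 Four.zero) x y ∨
        (x = src e0 ∧ y = tgt e0) := by
  rw [step_update]; simp [allows]

private lemma step_bwd_iff {x y : V} :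
    arcStep src tgt ∅ ∅ (Function.update φ e0 Four.backward) x y ↔
      arcStep src tgt ∅ ∅ (Function.update φ e0 Four.zero) x y ∨
        (x = tgt e0 ∧ y = src e0) := by
  rw [step_update]; simp [allows]

private lemma step_two_iff {x y : V} :
    arcStep src tgt ∅ ∅ (Function.update φ e0 Four.two) x y ↔
      arcStep src tgt ∅ ∅ (Function.update φ e0 Four.forward) x y ∨
        (x = tgt e0 ∧ y = src e0) := by
  rw [step_update, step_fwd_iff]
  simp only [allows, true_and]

private lemma reach_zero_le {c : Four} {x y : V} :
    reach src tgt ∅ ∅ (Function.update φ e0 Four.zero) x y →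
      reach src tgt ∅ ∅ (Function.update φ e0 c) x y := by
  intro h
  exact Relation.ReflTransGen.mono (p := arcStep src tgt ∅ ∅ (Function.update φ e0 c))
    (fun a b hab => step_update.mpr (Or.inl (Or.inl hab))) _ _ h

private lemma reach_le_two {c : Four} {x y : V} :
    reach src tgt ∅ ∅ (Function.update φ e0 c) x y →
      reach src tgt ∅ ∅ (Function.update φ e0 Four.two) x y := by
  intro h
  refine Relation.ReflTransGen.mono (p := arcStep src tgt ∅ ∅ (Function.update φ e0 Four.two))
    (fun a b hab => ?_) _ _ h
  rcases step_update.mp hab with (h' | ⟨_, h1, h2⟩) | ⟨_, h1, h2⟩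
  · exact step_update.mpr (Or.inl (Or.inl h'))
  · exact step_update.mpr (Or.inl (Or.inr ⟨trivial, h1, h2⟩))
  · exact step_update.mpr (Or.inr ⟨trivial, h1, h2⟩)

private lemma reach_fwd_cases {x y : V} :
    reach src tgt ∅ ∅ (Function.update φ e0 Four.forward) x y →
      reach src tgt ∅ ∅ (Function.update φ e0 Four.zero) x y ∨
        (reach src tgt ∅ ∅ (Function.update φ e0 Four.zero) x (src e0) ∧
          reach src tgt ∅ ∅ (Function.update φ e0 Four.zero) (tgt e0) y) := by
  intro h
  rw [reach_def, rtg_congr (fun x y => step_fwd_iff)] at h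
  exact rtg_or_single h

private lemma reach_bwd_cases {x y : V} :
    reach src tgt ∅ ∅ (Function.update φ e0 Four.backward) x y →
      reach src tgt ∅ ∅ (Function.update φ e0 Four.zero) x y ∨
        (reach src tgt ∅ ∅ (Function.update φ e0 Four.zero) x (tgt e0) ∧
          reach src tgt ∅ ∅ (Function.update φ e0 Four.zero) (src e0) y) := by
  intro h
  rw [reach_def, rtg_congr (fun x y => step_bwd_iff)] at h
  exact rtg_or_single h

private lemma reach_two_cases {x y : V} :
    reach src tgt ∅ ∅ (Function.update φ e0 Four.two) x y →
      reach src tgt ∅ ∅ (Function.update φ e0 Four.forward) x y ∨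
        (reach src tgt ∅ ∅ (Function.update φ e0 Four.forward) x (tgt e0) ∧
          reach src tgt ∅ ∅ (Function.update φ e0 Four.forward) (src e0) y) := by
  intro h
  rw [reach_def, rtg_congr (fun x y => step_two_iff)] at h
  exact rtg_or_single h

private lemma good_mono {W : Set E} (he : e0 ∉ W) {c c' : Four}
    (hsub : ∀ x y, reach src tgt ∅ ∅ (Function.update φ e0 c) x y →
      reach src tgt ∅ ∅ (Function.update φ e0 c') x y)
    (hg : GoodOn src tgt W (Function.update φ e0 c')) :
    GoodOn src tgt W (Function.update φ e0 c) := by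
  intro a ha h1 hr
  have hne : a.1 ≠ e0 := fun h => he (h ▸ ha)
  exact hg a ha ((oneWayArc_update hne).mpr ((oneWayArc_update hne).mp h1)) (hsub _ _ hr)

open Classical in
/-- The core exchange lemma. -/
private lemma core {W : Set E} (he : e0 ∉ W) :
    ((if GoodOn src tgt W (Function.update φ e0 Four.forward) then 1 else 0) +
      (if GoodOn src tgt W (Function.update φ e0 Four.backward) then 1 else 0) : ℕ) =
    (if GoodOn src tgt W (Function.update φ e0 Four.zero) then 1 else 0) +
      (if GoodOn src tgt W (Function.update φ e0 Four.two) then 1 else 0) := by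
  have oneW : ∀ {a : E × Bool} {c c' : Four}, a.1 ∈ W →
      oneWayArc (Function.update φ e0 c) a → oneWayArc (Function.update φ e0 c') a := by
    intro a c c' ha h
    have hne : a.1 ≠ e0 := fun hh => he (hh ▸ ha)
    exact (oneWayArc_update hne).mpr ((oneWayArc_update hne).mp h)
  have hfz : GoodOn src tgt W (Function.update φ e0 Four.forward) →
      GoodOn src tgt W (Function.update φ e0 Four.zero) :=
    good_mono he (fun x y => reach_zero_le)
  have hbz : GoodOn src tgt W (Function.update φ e0 Four.backward) →
      GoodOn src tgt W (Function.update φ e0 Four.zero) :=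
    good_mono he (fun x y => reach_zero_le)
  have htf : GoodOn src tgt W (Function.update φ e0 Four.two) →
      GoodOn src tgt W (Function.update φ e0 Four.forward) :=
    good_mono he (fun x y => reach_le_two)
  have htb : GoodOn src tgt W (Function.update φ e0 Four.two) →
      GoodOn src tgt W (Function.update φ e0 Four.backward) :=
    good_mono he (fun x y => reach_le_two)
  -- at least one direction works if zero works
  have some_dir : GoodOn src tgt W (Function.update φ e0 Four.zero) →
      GoodOn src tgt W (Function.update φ e0 Four.forward) ∨
      GoodOn src tgt W (Function.update φ e0 Four.backward) := by
    intro hz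
    by_contra hcon
    push_neg at hcon
    obtain ⟨hnf, hnb⟩ := hcon
    rw [GoodOn] at hnf hnb
    push_neg at hnf hnb
    obtain ⟨a, haW, ha1, har⟩ := hnf
    obtain ⟨b, hbW, hb1, hbr⟩ := hnb
    have ha1z : oneWayArc (Function.update φ e0 Four.zero) a := oneW haW ha1
    have hb1z : oneWayArc (Function.update φ e0 Four.zero) b := oneW hbW hb1
    rcases reach_fwd_cases har with h | ⟨hau, hav⟩
    · exact hz a haW ha1z h
    rcases reach_bwd_cases hbr with h | ⟨hbv, hbu⟩
    · exact hz b hbW hb1z h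
    -- reach0 : head a → src e0, tgt e0 → tail a ; head b → tgt e0, src e0 → tail b
    have stepa : reach src tgt ∅ ∅ (Function.update φ e0 Four.zero)
        (arcTail src tgt a) (arcHead src tgt a) :=
      Relation.ReflTransGen.single (oneWay_step ha1z)
    -- tgt e0 → tail a → head a → src e0 → tail b
    have hvu : reach src tgt ∅ ∅ (Function.update φ e0 Four.zero)
        (arcHead src tgt b) (arcTail src tgt b) :=
      (hbv.trans hav).trans (stepa.trans (hau.trans hbu))
    exact hz b hbW hb1z hvu
  -- not both directions work if two fails
  have not_both : ¬ GoodOn src tgt W (Function.update φ e0 Four.two) →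
      ¬ (GoodOn src tgt W (Function.update φ e0 Four.forward) ∧
        GoodOn src tgt W (Function.update φ e0 Four.backward)) := by
    intro hnt ⟨hf, hb⟩
    have hz := hfz hf
    rw [GoodOn] at hnt
    push_neg at hnt
    obtain ⟨a, haW, ha1, har⟩ := hnt
    have ha1z : oneWayArc (Function.update φ e0 Four.zero) a := oneW haW ha1
    rcases reach_two_cases har with h | ⟨hav, hut⟩
    · exact hf a haW (oneW haW ha1) h
    rcases reach_fwd_cases hav with h1 | ⟨h1, h1'⟩
    · -- head a →0 tgt e0
      rcases reach_fwd_cases hut with h2 | ⟨h2, h2'⟩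
      · -- src e0 →0 tail a : zero-cycle h1.trans? head a → tgt e0, src e0 → tail a:
        -- use backward: head a → tgt e0 → (bwd arc) src e0 → tail a
        have : reach src tgt ∅ ∅ (Function.update φ e0 Four.backward)
            (arcHead src tgt a) (arcTail src tgt a) :=
          (reach_zero_le h1).trans (Relation.ReflTransGen.head
            (step_bwd_iff.mpr (Or.inr ⟨rfl, rfl⟩)) (reach_zero_le h2))
        exact hb a haW (oneW haW ha1) this
      · -- src e0 →0 src e0 (h2), tgt e0 →0 tail a (h2') : head a →0 tgt e0 →0 tail a
        exact hz a haW ha1z (h1.trans h2')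
    · -- head a →0 src e0 (h1), tgt e0 →0 tgt e0
      rcases reach_fwd_cases hut with h2 | ⟨h2, h2'⟩
      · -- src e0 →0 tail a : head a →0 src e0 →0 tail a
        exact hz a haW ha1z (h1.trans h2)
      · -- tgt e0 →0 tail a (h2') : forward: head a →0 src e0 →f tgt e0 →0 tail a
        have : reach src tgt ∅ ∅ (Function.update φ e0 Four.forward)
            (arcHead src tgt a) (arcTail src tgt a) :=
          (reach_zero_le h1).trans (Relation.ReflTransGen.head
            (step_fwd_iff.mpr (Or.inr ⟨rfl, rfl⟩)) (reach_zero_le h2'))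
        exact hf a haW (oneW haW ha1) this
  by_cases ht : GoodOn src tgt W (Function.update φ e0 Four.two)
  · rw [if_pos ht, if_pos (htf ht), if_pos (htb ht), if_pos (hfz (htf ht))]
  · by_cases hz : GoodOn src tgt W (Function.update φ e0 Four.zero)
    · rw [if_pos hz, if_neg ht]
      rcases some_dir hz with hf | hb
      · have hnb : ¬ GoodOn src tgt W (Function.update φ e0 Four.backward) :=
          fun hb => not_both ht ⟨hf, hb⟩
        rw [if_pos hf, if_neg hnb]
      · by_cases hf : GoodOn src tgt W (Function.update φ e0 Four.forward)
        · exact absurd ⟨hf, hb⟩ (not_both ht)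
        · rw [if_neg hf, if_pos hb]
    · rw [if_neg hz, if_neg ht, if_neg (fun h => hz (hfz h)), if_neg (fun h => hz (hbz h))]

end Core


section Count

variable [Fintype E] {src tgt : E → V}

open Classical in
private noncomputable def cardK (src tgt : E → V) (K : Four → Prop) (W : Set E)
    (U : Finset E) (φ : E → Four) : ℕ :=
  (Finset.univ.filter fun ψ : E → Four =>
    (∀ e, e ∉ U → ψ e = φ e) ∧ (∀ e ∈ U, K (ψ e)) ∧ GoodOn src tgt W ψ).card

open Classical in
private lemma cardK_insert (K : Four → Prop) (k1 k2 : Four) (hK : ∀ x, K x ↔ x = k1 ∨ x = k2)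
    (hne : k1 ≠ k2) {U : Finset E} {e0 : E} (he0 : e0 ∉ U) (W : Set E) (φ : E → Four) :
    cardK src tgt K W (insert e0 U) φ =
      cardK src tgt K W U (Function.update φ e0 k1) +
        cardK src tgt K W U (Function.update φ e0 k2) := by
  unfold cardK
  have hsplit : ∀ ψ : E → Four,
      ((∀ e, e ∉ insert e0 U → ψ e = φ e) ∧ (∀ e ∈ insert e0 U, K (ψ e)) ∧ GoodOn src tgt W ψ)
      ↔ (((∀ e, e ∉ U → ψ e = Function.update φ e0 k1 e) ∧ (∀ e ∈ U, K (ψ e)) ∧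
            GoodOn src tgt W ψ)
        ∨ ((∀ e, e ∉ U → ψ e = Function.update φ e0 k2 e) ∧ (∀ e ∈ U, K (ψ e)) ∧
            GoodOn src tgt W ψ)) := by
    intro ψ
    constructor
    · rintro ⟨hag, hk, hg⟩
      have h0 := (hK _).mp (hk e0 (Finset.mem_insert_self _ _))
      have hUk : ∀ e ∈ U, K (ψ e) := fun e he => hk e (Finset.mem_insert_of_mem he)
      have hrest : ∀ (k : Four), ψ e0 = k → ∀ e, e ∉ U → ψ e = Function.update φ e0 k e := by
        intro k hk' e heU
        by_cases he : e = e0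
        · subst he; rw [Function.update_self]; exact hk'
        · rw [Function.update_of_ne he]
          exact hag e (by simp [Finset.mem_insert, he, heU])
      rcases h0 with h0 | h0
      · exact Or.inl ⟨hrest k1 h0, hUk, hg⟩
      · exact Or.inr ⟨hrest k2 h0, hUk, hg⟩
    · have hb : ∀ k : Four, K k →
          ((∀ e, e ∉ U → ψ e = Function.update φ e0 k e) ∧ (∀ e ∈ U, K (ψ e)) ∧
            GoodOn src tgt W ψ) →
          ((∀ e, e ∉ insert e0 U → ψ e = φ e) ∧ (∀ e ∈ insert e0 U, K (ψ e)) ∧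
            GoodOn src tgt W ψ) := by
        rintro k hKk ⟨hag, hk, hg⟩
        refine ⟨fun e he => ?_, fun e he => ?_, hg⟩
        · have he0' : e ≠ e0 := fun h => he (h ▸ Finset.mem_insert_self _ _)
          have heU : e ∉ U := fun h => he (Finset.mem_insert_of_mem h)
          have := hag e heU
          rwa [Function.update_of_ne he0'] at this
        · rcases Finset.mem_insert.mp he with rfl | he'
          · have := hag e he0
            rw [Function.update_self] at this
            rw [this]; exact hKk
          · exact hk e he'
      rintro (h | h)
      · exact hb k1 ((hK k1).mpr (Or.inl rfl)) h
      · exact hb k2 ((hK k2).mpr (Or.inr rfl)) h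
  rw [Finset.filter_congr (fun ψ _ => hsplit ψ), Finset.filter_or]
  refine Finset.card_union_of_disjoint ?_
  rw [Finset.disjoint_left]
  rintro ψ h1 h2
  simp only [Finset.mem_filter] at h1 h2
  have e1 := h1.2.1 e0 he0
  have e2 := h2.2.1 e0 he0
  rw [Function.update_self] at e1 e2
  exact hne (e1.symm.trans e2)

open Classical in
private lemma cardK_update (K : Four → Prop) {U : Finset E} {e0 : E} (he0 : e0 ∉ U)
    (W : Set E) (φ : E → Four) (c : Four) :
    cardK src tgt K W U (Function.update φ e0 c) =
      (Finset.univ.filter fun ρ : E → Four =>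
        ((∀ e, e ∉ U → ρ e = Function.update φ e0 Four.zero e) ∧ (∀ e ∈ U, K (ρ e))) ∧
          GoodOn src tgt W (Function.update ρ e0 c)).card := by
  unfold cardK
  refine Finset.card_bij' (fun ψ _ => Function.update ψ e0 Four.zero)
    (fun ρ _ => Function.update ρ e0 c) ?_ ?_ ?_ ?_
  · intro ψ hψ
    simp only [Finset.mem_filter, Finset.mem_univ, true_and] at hψ ⊢
    obtain ⟨hag, hk, hg⟩ := hψ
    have hψe0 : ψ e0 = c := by
      have := hag e0 he0; rwa [Function.update_self] at this
    have hupd : Function.update (Function.update ψ e0 Four.zero) e0 c = ψ := by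
      rw [Function.update_idem, ← hψe0, Function.update_eq_self]
    refine ⟨⟨fun e he => ?_, fun e he => ?_⟩, ?_⟩
    · by_cases h : e = e0
      · subst h; rw [Function.update_self, Function.update_self]
      · rw [Function.update_of_ne h, Function.update_of_ne h]
        have := hag e he; rwa [Function.update_of_ne h] at this
    · have hne : e ≠ e0 := fun h => he0 (h ▸ he)
      rw [Function.update_of_ne hne]; exact hk e he
    · rwa [hupd]
  · intro ρ hρ
    simp only [Finset.mem_filter, Finset.mem_univ, true_and] at hρ ⊢
    obtain ⟨⟨hag, hk⟩, hg⟩ := hρ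
    refine ⟨fun e he => ?_, fun e he => ?_, hg⟩
    · by_cases h : e = e0
      · subst h; rw [Function.update_self, Function.update_self]
      · rw [Function.update_of_ne h, Function.update_of_ne h]
        have := hag e he; rwa [Function.update_of_ne h] at this
    · have hne : e ≠ e0 := fun h => he0 (h ▸ he)
      rw [Function.update_of_ne hne]; exact hk e he
  · intro ψ hψ
    simp only [Finset.mem_filter, Finset.mem_univ, true_and] at hψ
    have hψe0 : ψ e0 = c := by
      have := hψ.1 e0 he0; rwa [Function.update_self] at this
    show Function.update (Function.update ψ e0 Four.zero) e0 c = ψ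
    rw [Function.update_idem, ← hψe0, Function.update_eq_self]
  · intro ρ hρ
    simp only [Finset.mem_filter, Finset.mem_univ, true_and] at hρ
    have hρe0 : ρ e0 = Four.zero := by
      have := hρ.1.1 e0 he0; rwa [Function.update_self] at this
    show Function.update (Function.update ρ e0 c) e0 Four.zero = ρ
    rw [Function.update_idem, ← hρe0, Function.update_eq_self]

private lemma isSolid_iff (x : Four) : IsSolid x ↔ x = Four.zero ∨ x = Four.two := Iff.rfl

private lemma isOneWay_iff (x : Four) : IsOneWay x ↔ x = Four.forward ∨ x = Four.backward :=
  Iff.rfl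

open Classical in
private lemma key (W : Set E) (U : Finset E) :
    (∀ e ∈ U, e ∉ W) → ∀ φ : E → Four,
      cardK src tgt IsSolid W U φ = cardK src tgt IsOneWay W U φ := by
  induction U using Finset.induction_on with
  | empty =>
    intro _ φ
    unfold cardK
    congr 1
    apply Finset.filter_congr
    intro ψ _
    constructor
    · rintro ⟨h1, _, h3⟩
      exact ⟨h1, fun e he => absurd he (Finset.notMem_empty e), h3⟩
    · rintro ⟨h1, _, h3⟩
      exact ⟨h1, fun e he => absurd he (Finset.notMem_empty e), h3⟩
  | @insert e0 U' he0 ih =>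
    intro hUW φ
    have he0W : e0 ∉ W := hUW e0 (Finset.mem_insert_self _ _)
    have hU'W : ∀ e ∈ U', e ∉ W := fun e he => hUW e (Finset.mem_insert_of_mem he)
    rw [cardK_insert IsSolid Four.zero Four.two isSolid_iff (by simp) he0 W φ,
      cardK_insert IsOneWay Four.forward Four.backward isOneWay_iff (by simp) he0 W φ,
      ← ih hU'W (Function.update φ e0 Four.forward), ← ih hU'W (Function.update φ e0 Four.backward)]
    rw [cardK_update IsSolid he0 W φ Four.zero, cardK_update IsSolid he0 W φ Four.two,
      cardK_update IsSolid he0 W φ Four.forward, cardK_update IsSolid he0 W φ Four.backward]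
    rw [Finset.card_filter, Finset.card_filter, Finset.card_filter, Finset.card_filter,
      ← Finset.sum_add_distrib, ← Finset.sum_add_distrib]
    refine Finset.sum_congr rfl fun ρ _ => ?_
    by_cases hbase : (∀ e, e ∉ U' → ρ e = Function.update φ e0 Four.zero e) ∧
        (∀ e ∈ U', IsSolid (ρ e))
    · simp only [and_iff_right hbase]
      exact (core (φ := ρ) he0W).symm
    · have hf : ∀ G : Prop, (((∀ e ∉ U', ρ e = Function.update φ e0 Four.zero e) ∧
          ∀ e ∈ U', IsSolid (ρ e)) ∧ G) ↔ False := fun G => iff_false_intro (fun h => hbase h.1)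
      simp only [hf, if_false]

end Count


section Assemble

variable [Fintype E] {src tgt : E → V}

private def pat (φ : E → Four) (e : E) : Option Bool :=
  match φ e with
  | Four.forward => some true
  | Four.backward => some false
  | _ => none

private lemma pat_eq_none {φ : E → Four} {e : E} : pat φ e = none ↔ IsSolid (φ e) := by
  cases h : φ e <;> simp [pat, h, IsSolid]

private lemma pat_eq_some {φ : E → Four} {e : E} {b : Bool} :
    pat φ e = some b ↔ φ e = oneWayFour b := by
  cases h : φ e <;> cases b <;> simp [pat, h, oneWayFour]

private def phip (p : E → Option Bool) (e : E) : Four := (p e).elim Four.zero oneWayFour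

private lemma oneWay_oneWayFour {b : Bool} : IsOneWay (oneWayFour b) := by
  cases b <;> simp [IsOneWay, oneWayFour]

private lemma not_solid_oneWayFour {b : Bool} : ¬ IsSolid (oneWayFour b) := by
  cases b <;> simp [IsSolid, oneWayFour]

open Classical in
private lemma fiberA (p : E → Option Bool) :
    ((Finset.univ.filter fun φ : E → Four => GoodOn src tgt Set.univ φ).filter
        (fun φ => pat φ = p)).card
      = cardK src tgt IsSolid {e | p e ≠ none}
          (Finset.univ.filter fun e => p e = none) (phip p) := by
  unfold cardK
  congr 1
  ext ψ
  simp only [Finset.mem_filter, Finset.mem_univ, true_and]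
  constructor
  · rintro ⟨hg, hp⟩
    have hpe : ∀ e, pat ψ e = p e := fun e => congrFun hp e
    refine ⟨fun e he => ?_, fun e he => ?_, fun a ha h1 hr => hg a (Set.mem_univ _) h1 hr⟩
    · have he' : ¬ p e = none := he
      obtain ⟨b, hb⟩ := Option.ne_none_iff_exists'.mp he'
      have hψe : ψ e = oneWayFour b := pat_eq_some.mp (by rw [hpe e, hb])
      rw [hψe]; simp [phip, hb]
    · exact pat_eq_none.mp (by rw [hpe e, he])
  · rintro ⟨hag, hsol, hg⟩
    constructor
    · intro a _ h1 hr
      have haW : a.1 ∈ {e | p e ≠ none} := by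
        intro hnone
        have hs := hsol a.1 hnone
        rw [oneWayArc] at h1
        rw [h1] at hs
        exact not_solid_oneWayFour hs
      exact hg a haW h1 hr
    · funext e
      by_cases he : p e = none
      · rw [he, pat_eq_none]
        exact hsol e he
      · obtain ⟨b, hb⟩ := Option.ne_none_iff_exists'.mp he
        have hψe : ψ e = phip p e := hag e he
        rw [hb, pat_eq_some, hψe]
        simp [phip, hb]

private lemma toFour_oneWayArc {σ : E → Bool} {a : E × Bool} :
    oneWayArc (toFour σ) a ↔ a.2 = σ a.1 := by
  rw [oneWayArc]
  show oneWayFour (σ a.1) = oneWayFour a.2 ↔ _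
  constructor
  · intro h; exact (oneWayFour_inj h).symm
  · intro h; rw [h]

private def pat2 (sp : (E → Bool) × (E → Bool)) (e : E) : Option Bool :=
  if sp.2 e = true then some (sp.1 e) else none

open Classical in
private lemma fiberB (p : E → Option Bool) :
    ((Finset.univ.filter fun sp : (E → Bool) × (E → Bool) =>
        ∀ e, sp.2 e = true → ¬ reach src tgt ∅ ∅ (toFour sp.1)
          (arcHead src tgt (e, sp.1 e)) (arcTail src tgt (e, sp.1 e))).filter
      (fun sp => pat2 sp = p)).card
    = cardK src tgt IsOneWay {e | p e ≠ none}
        (Finset.univ.filter fun e => p e = none) (phip p) := by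
  unfold cardK
  refine Finset.card_bij' (fun sp _ => toFour sp.1) (fun ψ _ =>
    (fun e => decide (ψ e = Four.forward), fun e => (p e).isSome)) ?_ ?_ ?_ ?_
  · rintro ⟨σ, S⟩ hsp
    simp only [Finset.mem_filter, Finset.mem_univ, true_and] at hsp ⊢
    obtain ⟨hB, hp⟩ := hsp
    have hpe : ∀ e, (if S e = true then some (σ e) else none) = p e := fun e => congrFun hp e
    refine ⟨fun e he => ?_, fun e _ => oneWay_oneWayFour, ?_⟩
    · have he' : ¬ p e = none := he
      have hSe : S e = true := by
        by_contra hS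
        rw [← hpe e, if_neg hS] at he'; exact he' rfl
      have : p e = some (σ e) := by rw [← hpe e, if_pos hSe]
      show oneWayFour (σ e) = phip p e
      simp [phip, this]
    · rintro ⟨e, b⟩ ha h1 hr
      have hb : b = σ e := toFour_oneWayArc.mp h1
      subst hb
      have hSe : S e = true := by
        by_contra hS
        exact ha (by rw [← hpe e, if_neg hS])
      exact hB e hSe hr
  · intro ψ hψ
    simp only [Finset.mem_filter, Finset.mem_univ, true_and] at hψ ⊢
    obtain ⟨hag, how, hg⟩ := hψ
    have hOW : ∀ e, IsOneWay (ψ e) := by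
      intro e
      by_cases he : p e = none
      · exact how e he
      · obtain ⟨b, hb⟩ := Option.ne_none_iff_exists'.mp he
        have : ψ e = phip p e := hag e he
        rw [this]; simp only [phip, hb, Option.elim]; exact oneWay_oneWayFour
    have htF : toFour (fun e => decide (ψ e = Four.forward)) = ψ := by
      funext e
      rcases hOW e with h | h <;> simp [toFour, oneWayFour, h] <;> exact h
    refine ⟨?_, ?_⟩
    · intro e he
      rw [Option.isSome_iff_exists] at he
      obtain ⟨b, hb⟩ := he
      have hWe : e ∈ {e | p e ≠ none} := by simp [hb]
      have h1 : oneWayArc (toFour fun e => decide (ψ e = Four.forward))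
          (e, decide (ψ e = Four.forward)) := toFour_oneWayArc.mpr rfl
      rw [htF] at h1 ⊢
      exact hg _ hWe h1
    · funext e
      by_cases he : p e = none
      · show (if (p e).isSome = true then some (decide (ψ e = Four.forward)) else none) = p e
        rw [he]; rfl
      · obtain ⟨b, hb⟩ := Option.ne_none_iff_exists'.mp he
        have hS : (p e).isSome = true := by rw [hb]; rfl
        show (if (p e).isSome = true then some (decide (ψ e = Four.forward)) else none) = p e
        have hψe : ψ e = oneWayFour b := by
          have h := hag e he
          rw [h]; simp [phip, hb]
        rw [hS, if_pos rfl, hb, hψe]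
        cases b <;> rfl
  · rintro ⟨σ, S⟩ hsp
    simp only [Finset.mem_filter, Finset.mem_univ, true_and] at hsp
    have hpe : ∀ e, (if S e = true then some (σ e) else none) = p e :=
      fun e => congrFun hsp.2 e
    have h1 : (fun e => decide (toFour σ e = Four.forward)) = σ := by
      funext e
      cases hσ : σ e <;> simp [toFour, oneWayFour, hσ]
    have h2 : (fun e => (p e).isSome) = S := by
      funext e
      rw [← hpe e]
      by_cases hSe : S e = true
      · rw [if_pos hSe, hSe]; rfl
      · rw [if_neg hSe]
        simp [Bool.eq_false_iff.mpr hSe]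
    show ((fun e => decide (toFour σ e = Four.forward)), fun e => (p e).isSome) = (σ, S)
    rw [h1, h2]
  · intro ψ hψ
    simp only [Finset.mem_filter, Finset.mem_univ, true_and] at hψ
    obtain ⟨hag, how, hg⟩ := hψ
    have hOW : ∀ e, IsOneWay (ψ e) := by
      intro e
      by_cases he : p e = none
      · exact how e he
      · obtain ⟨b, hb⟩ := Option.ne_none_iff_exists'.mp he
        have : ψ e = phip p e := hag e he
        rw [this]; simp only [phip, hb, Option.elim]; exact oneWay_oneWayFour
    show toFour (fun e => decide (ψ e = Four.forward)) = ψ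
    funext e
    rcases hOW e with h | h <;> simp [toFour, oneWayFour, h] <;> exact h


open Classical in
private lemma card_subsupport (D : Finset E) :
    (Finset.univ.filter fun S : E → Bool => ∀ e, S e = true → e ∈ D).card = 2 ^ D.card := by
  have h1 : (Finset.univ.filter fun S : E → Bool => ∀ e, S e = true → e ∈ D).card
      = Fintype.card {S : E → Bool // ∀ e, S e = true → e ∈ D} :=
    (Fintype.card_subtype _).symm
  rw [h1]
  have eqv : {S : E → Bool // ∀ e, S e = true → e ∈ D} ≃ (↥D → Bool) :=
    { toFun := fun S x => S.1 x.1
      invFun := fun f => ⟨fun e => if h : e ∈ D then f ⟨e, h⟩ else false, by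
        intro e he
        by_cases h : e ∈ D
        · exact h
        · simp [h] at he⟩
      left_inv := fun S => Subtype.ext (funext fun e => by
        by_cases h : e ∈ D
        · simp [h]
        · cases hS : S.1 e
          · simp [h, hS]
          · exact absurd (S.2 e hS) h)
      right_inv := fun f => funext fun x => by simp }
  rw [Fintype.card_congr eqv, Fintype.card_fun, Fintype.card_bool, Fintype.card_coe]

open Classical in
private lemma ncard_acy (σ : E → Bool) :
    (AcySet src tgt ∅ ∅ (toFour σ)).ncard
      = (Finset.univ.filter fun e : E => ¬ reach src tgt ∅ ∅ (toFour σ)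
          (arcHead src tgt (e, σ e)) (arcTail src tgt (e, σ e))).card := by
  have himg : AcySet src tgt ∅ ∅ (toFour σ)
      = ↑((Finset.univ.filter fun e : E => ¬ reach src tgt ∅ ∅ (toFour σ)
          (arcHead src tgt (e, σ e)) (arcTail src tgt (e, σ e))).image fun e => (e, σ e)) := by
    ext a
    obtain ⟨e, b⟩ := a
    simp only [AcySet, Set.mem_setOf_eq, Finset.coe_image, Set.mem_image, Finset.mem_coe,
      Finset.mem_filter, Finset.mem_univ, true_and]
    constructor
    · rintro ⟨h1, h2⟩
      have hb : b = σ e := toFour_oneWayArc.mp h1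
      subst hb
      exact ⟨e, h2, rfl⟩
    · rintro ⟨e', h1, h2⟩
      have he : e' = e := congrArg Prod.fst h2
      subst he
      have hb : σ e' = b := congrArg Prod.snd h2
      subst hb
      exact ⟨toFour_oneWayArc.mpr rfl, h1⟩
  rw [himg, Set.ncard_coe_finset]
  exact Finset.card_image_of_injective _ (fun a b h => (Prod.ext_iff.mp h).1)

open Classical in
private lemma fiberSigma (σ : E → Bool) :
    ((Finset.univ.filter fun sp : (E → Bool) × (E → Bool) =>
        ∀ e, sp.2 e = true → ¬ reach src tgt ∅ ∅ (toFour sp.1)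
          (arcHead src tgt (e, sp.1 e)) (arcTail src tgt (e, sp.1 e))).filter
      (fun sp => sp.1 = σ)).card
    = (Finset.univ.filter fun S : E → Bool => ∀ e, S e = true →
        e ∈ (Finset.univ.filter fun e : E => ¬ reach src tgt ∅ ∅ (toFour σ)
          (arcHead src tgt (e, σ e)) (arcTail src tgt (e, σ e)))).card := by
  refine Finset.card_bij' (fun sp _ => sp.2) (fun S _ => (σ, S)) ?_ ?_ ?_ ?_
  · rintro ⟨σ', S⟩ hsp
    simp only [Finset.mem_filter, Finset.mem_univ, true_and] at hsp ⊢
    obtain ⟨hB, rfl⟩ := hsp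
    exact hB
  · intro S hS
    simp only [Finset.mem_filter, Finset.mem_univ, true_and] at hS ⊢
    exact ⟨hS, trivial⟩
  · rintro ⟨σ', S⟩ hsp
    simp only [Finset.mem_filter, Finset.mem_univ, true_and] at hsp
    obtain ⟨_, rfl⟩ := hsp
    rfl
  · intro S _
    rfl

end Assemble

end Aux

/-- The number of acyclic fourientations of a finite graph `G` (fourientations
all of whose 1-way edges are acyclic) equals `∑_α 2^{|Acy(α)|}`, the sum being over all
orientations `α` of `G`. -/
theorem statement3 {V E : Type*} [Fintype V] [Fintype E] [DecidableEq E] (src tgt : E → V) :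
    Nat.card {φ : E → Four //
        ∀ a : E × Bool, oneWayArc φ a →
          ¬ reach src tgt ∅ ∅ φ (arcHead src tgt a) (arcTail src tgt a)} =
    ∑ σ : E → Bool, 2 ^ (AcySet src tgt ∅ ∅ (toFour σ)).ncard := by
  classical
  have hpred : ∀ φ : E → Four,
      (∀ a : E × Bool, oneWayArc φ a →
        ¬ reach src tgt ∅ ∅ φ (arcHead src tgt a) (arcTail src tgt a))
      ↔ GoodOn src tgt Set.univ φ :=
    fun φ => ⟨fun h a _ ha => h a ha, fun h a ha => h a (Set.mem_univ _) ha⟩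
  rw [Nat.card_congr (Equiv.subtypeEquivRight hpred), Nat.card_eq_fintype_card,
    Fintype.card_subtype]
  calc (Finset.univ.filter fun φ : E → Four => GoodOn src tgt Set.univ φ).card
      = ∑ p : E → Option Bool, ((Finset.univ.filter fun φ : E → Four =>
            GoodOn src tgt Set.univ φ).filter (fun φ => pat φ = p)).card :=
        Finset.card_eq_sum_card_fiberwise (fun x _ => Finset.mem_univ _)
    _ = ∑ p : E → Option Bool, ((Finset.univ.filter fun sp : (E → Bool) × (E → Bool) =>
            ∀ e, sp.2 e = true → ¬ reach src tgt ∅ ∅ (toFour sp.1)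
              (arcHead src tgt (e, sp.1 e)) (arcTail src tgt (e, sp.1 e))).filter
          (fun sp => pat2 sp = p)).card := by
        refine Finset.sum_congr rfl fun p _ => ?_
        rw [fiberA p, fiberB p]
        exact key {e | p e ≠ none} _
          (fun e he hW => hW (Finset.mem_filter.mp he).2) (phip p)
    _ = (Finset.univ.filter fun sp : (E → Bool) × (E → Bool) =>
            ∀ e, sp.2 e = true → ¬ reach src tgt ∅ ∅ (toFour sp.1)
              (arcHead src tgt (e, sp.1 e)) (arcTail src tgt (e, sp.1 e))).card :=
        (Finset.card_eq_sum_card_fiberwise (fun x _ => Finset.mem_univ _)).symm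
    _ = ∑ σ : E → Bool, ((Finset.univ.filter fun sp : (E → Bool) × (E → Bool) =>
            ∀ e, sp.2 e = true → ¬ reach src tgt ∅ ∅ (toFour sp.1)
              (arcHead src tgt (e, sp.1 e)) (arcTail src tgt (e, sp.1 e))).filter
          (fun sp => sp.1 = σ)).card :=
        Finset.card_eq_sum_card_fiberwise (fun x _ => Finset.mem_univ _)
    _ = ∑ σ : E → Bool, 2 ^ (AcySet src tgt ∅ ∅ (toFour σ)).ncard := by
        refine Finset.sum_congr rfl fun σ _ => ?_
        rw [fiberSigma σ, card_subsupport, ← ncard_acy]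
end SubgraphsVsOrientations
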